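/- arXiv:1909.00058 — 3 statements merged into one kernel-verified Lean document; each statement's English description precedes it below -/
import Mathlib

section
/- For 0 < q < 1 and all x in the interval of convergence |x| < 1/(1-q), the Borel-type integral identity holds: ∫_0^∞ e^{-s} C_0^{(q,1)}(x s) ds = Σ_{r=0}^∞ (-x)^r/[r]_q! = e_q(x). -/
/-- The q-factorial `[n]_q! = ∏_{r=1}^n (1-q^r)/(1-q)`. -/
noncomputable def qFactorial (q : ℝ) (n : ℕ) : ℝ :=
  ∏ r ∈ Finset.Icc 1 n, (1 - q ^ r) / (1 - q)

/-- The (q,1)-Tricomi function `C_0^{(q,1)}(y) = Σ_r (-y)^r/(r! [r]_q!)`. -/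
noncomputable def qTricomi (q y : ℝ) : ℝ :=
  ∑' r : ℕ, (-y) ^ r / (r.factorial * qFactorial q r)

open MeasureTheory Real Filter Set

lemma qFactorial_pos (q : ℝ) (hq0 : 0 < q) (hq1 : q < 1) (n : ℕ) :
    0 < qFactorial q n := by
  apply Finset.prod_pos
  intro r hr
  have hr1 : r ≠ 0 := Nat.one_le_iff_ne_zero.mp (Finset.mem_Icc.mp hr).1
  have : q ^ r < 1 := pow_lt_one₀ hq0.le hq1 hr1
  have : (0:ℝ) < 1 - q := by linarith
  apply div_pos (by linarith) this

lemma qFactorial_succ (q : ℝ) (n : ℕ) :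
    qFactorial q (n + 1) = qFactorial q n * ((1 - q ^ (n+1)) / (1 - q)) := by
  unfold qFactorial
  exact Finset.prod_Icc_succ_top (Nat.le_add_left 1 n) _

lemma summable_qexp (q : ℝ) (hq0 : 0 < q) (hq1 : q < 1)
    (x : ℝ) (hx : |x| < 1 / (1 - q)) :
    Summable (fun r : ℕ => |x| ^ r / qFactorial q r) := by
  rcases eq_or_ne x 0 with rfl | hx0
  · apply summable_of_ne_finset_zero (s := {0})
    intro r hr
    simp only [Finset.mem_singleton] at hr
    simp [zero_pow hr]
  · have hq : (0:ℝ) < 1 - q := by linarith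
    have hxpos : 0 < |x| := abs_pos.mpr hx0
    apply summable_of_ratio_test_tendsto_lt_one (l := |x| * (1 - q))
    · have := (lt_div_iff₀ hq).mp hx
      linarith
    · filter_upwards with n
      have := qFactorial_pos q hq0 hq1 n
      positivity
    · have key : ∀ n : ℕ,
        ‖|x| ^ (n+1) / qFactorial q (n+1)‖ / ‖|x| ^ n / qFactorial q n‖
          = |x| * ((1 - q) / (1 - q ^ (n+1))) := by
        intro n
        have h1 := qFactorial_pos q hq0 hq1 n
        have h1' := qFactorial_pos q hq0 hq1 (n+1)
        have h2 : q ^ (n+1) < 1 := pow_lt_one₀ hq0.le hq1 (Nat.succ_ne_zero n)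
        have h3 : (0:ℝ) < 1 - q ^ (n+1) := by linarith
        rw [Real.norm_eq_abs, Real.norm_eq_abs,
          abs_of_pos (div_pos (pow_pos hxpos _) h1'),
          abs_of_pos (div_pos (pow_pos hxpos _) h1), qFactorial_succ, pow_succ]
        field_simp
      simp_rw [key]
      have : Filter.Tendsto (fun n : ℕ => 1 - q ^ (n+1)) Filter.atTop (nhds 1) := by
        have := (tendsto_pow_atTop_nhds_zero_of_lt_one hq0.le hq1).comp
          (tendsto_add_atTop_nat 1)
        have h := (tendsto_const_nhds (x := (1:ℝ))).sub this
        simpa using h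
      have h2 : Filter.Tendsto (fun n : ℕ => |x| * ((1 - q) / (1 - q ^ (n+1))))
          Filter.atTop (nhds (|x| * ((1 - q) / 1))) :=
        tendsto_const_nhds.mul (tendsto_const_nhds.div this one_ne_zero)
      simpa using h2

lemma integrable_exp_pow (r : ℕ) :
    IntegrableOn (fun s : ℝ => Real.exp (-s) * s ^ r) (Set.Ioi 0) := by
  have h := Real.GammaIntegral_convergent (s := (r:ℝ) + 1) (by positivity)
  apply h.congr_fun _ measurableSet_Ioi
  intro s hs
  simp only
  rw [add_sub_cancel_right, Real.rpow_natCast]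

lemma integral_exp_pow (r : ℕ) :
    ∫ s in Set.Ioi (0:ℝ), Real.exp (-s) * s ^ r = r.factorial := by
  have h := Real.Gamma_eq_integral (s := (r:ℝ) + 1) (by positivity)
  rw [Real.Gamma_nat_eq_factorial] at h
  rw [h]
  apply setIntegral_congr_fun measurableSet_Ioi
  intro s hs
  simp only
  rw [add_sub_cancel_right, Real.rpow_natCast]

theorem borel_transform_qTricomi (q : ℝ) (hq0 : 0 < q) (hq1 : q < 1)
    (x : ℝ) (hx : |x| < 1 / (1 - q)) :
    ∫ s in Set.Ioi (0 : ℝ), Real.exp (-s) * qTricomi q (x * s)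
      = ∑' r : ℕ, (-x) ^ r / qFactorial q r := by
  set F : ℕ → ℝ → ℝ := fun r s =>
    ((-x) ^ r / (r.factorial * qFactorial q r)) * (Real.exp (-s) * s ^ r) with hF
  have hqfpos := qFactorial_pos q hq0 hq1
  -- pointwise identity
  have hpt : ∀ s : ℝ, Real.exp (-s) * qTricomi q (x * s) = ∑' r, F r s := by
    intro s
    rw [qTricomi, ← tsum_mul_left]
    apply tsum_congr
    intro r
    rw [hF]
    simp only
    rw [show -(x*s) = (-x)*s from by ring, mul_pow]
    field_simp
  -- integrability and integral values
  have hint : ∀ r : ℕ, Integrable (F r) (volume.restrict (Set.Ioi 0)) := by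
    intro r
    exact ((integrable_exp_pow r).const_mul _)
  have hval : ∀ r : ℕ, ∫ s in Set.Ioi (0:ℝ), F r s = (-x) ^ r / qFactorial q r := by
    intro r
    rw [hF]
    simp only
    rw [MeasureTheory.integral_const_mul, integral_exp_pow]
    have h1 : (r.factorial : ℝ) ≠ 0 := Nat.cast_ne_zero.mpr r.factorial_ne_zero
    have h2 : qFactorial q r ≠ 0 := (hqfpos r).ne'
    field_simp
  have hnorm : ∀ r : ℕ, (∫ s in Set.Ioi (0:ℝ), ‖F r s‖) = |x| ^ r / qFactorial q r := by
    intro r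
    have : ∀ s ∈ Set.Ioi (0:ℝ), ‖F r s‖
        = (|x| ^ r / (r.factorial * qFactorial q r)) * (Real.exp (-s) * s ^ r) := by
      intro s hs
      rw [Set.mem_Ioi] at hs
      rw [hF]
      simp only
      rw [norm_mul, Real.norm_eq_abs, Real.norm_eq_abs,
        abs_of_pos (by positivity : (0:ℝ) < Real.exp (-s) * s ^ r),
        abs_div, abs_pow, abs_neg,
        abs_of_pos (mul_pos (by positivity : (0:ℝ) < (r.factorial : ℝ)) (hqfpos r))]
    rw [setIntegral_congr_fun measurableSet_Ioi this, MeasureTheory.integral_const_mul,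
      integral_exp_pow]
    have h1 : (r.factorial : ℝ) ≠ 0 := Nat.cast_ne_zero.mpr r.factorial_ne_zero
    have h2 : qFactorial q r ≠ 0 := (hqfpos r).ne'
    field_simp
  have hsum : Summable (fun r : ℕ => ∫ s in Set.Ioi (0:ℝ), ‖F r s‖) := by
    apply (summable_qexp q hq0 hq1 x hx).congr
    intro r
    exact (hnorm r).symm
  have key := MeasureTheory.integral_tsum_of_summable_integral_norm hint hsum
  calc ∫ s in Set.Ioi (0 : ℝ), Real.exp (-s) * qTricomi q (x * s)
      = ∫ s in Set.Ioi (0 : ℝ), ∑' r, F r s := by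
        apply integral_congr_ae
        filter_upwards with s using hpt s
    _ = ∑' r : ℕ, ∫ s in Set.Ioi (0:ℝ), F r s := key.symm
    _ = ∑' r : ℕ, (-x) ^ r / qFactorial q r := tsum_congr hval
end

section
/- For 0 < q < 1, defining π_q = Γ_q(1/2)^2, the q-Wallis product formula holds: π_q = ([2]_{√q}/[∞]_{√q}) · Π_{n=0}^∞ ([2n+2]_{√q}/[2n+1]_{√q})^2, where [∞]_{√q} = 1/(1-√q). -/
/-- The Thomae–Jackson q-Gamma function. -/
noncomputable def qGamma (q x : ℝ) : ℝ :=
  (1 - q) ^ (1 - x) * ∏' n : ℕ, (1 - q ^ (n + 1)) / (1 - q ^ ((n : ℝ) + x))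

/-- The q-number with base `p` and natural exponent `m`. -/
noncomputable def qNum (p : ℝ) (m : ℕ) : ℝ := (1 - p ^ m) / (1 - p)

/-- `[∞]_p = 1/(1-p)`. -/
noncomputable def qNumInf (p : ℝ) : ℝ := 1 / (1 - p)

theorem q_wallis_formula (q : ℝ) (hq0 : 0 < q) (hq1 : q < 1) :
    qGamma q (1 / 2) ^ 2
      = qNum (Real.sqrt q) 2 / qNumInf (Real.sqrt q) *
          ∏' n : ℕ, (qNum (Real.sqrt q) (2 * n + 2) / qNum (Real.sqrt q) (2 * n + 1)) ^ 2 := by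
  set p := Real.sqrt q with hpdef
  have hp0 : 0 < p := Real.sqrt_pos.2 hq0
  have hp1 : p < 1 := by
    rw [hpdef, show (1:ℝ) = Real.sqrt 1 by simp]
    exact Real.sqrt_lt_sqrt hq0.le hq1
  have hpq : p ^ 2 = q := Real.sq_sqrt hq0.le
  have hpos : ∀ k : ℕ, 0 < 1 - p ^ (k + 1) := by
    intro k
    have h : p ^ (k + 1) < 1 := pow_lt_one₀ hp0.le hp1 (by omega)
    linarith
  set f : ℕ → ℝ := fun n => (1 - p ^ (2 * n + 2)) / (1 - p ^ (2 * n + 1)) with hfdef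
  have hfpos : ∀ n, 0 < f n := fun n =>
    div_pos (by simpa using hpos (2 * n + 1)) (by simpa using hpos (2 * n))
  have hf1 : ∀ n, 1 ≤ f n := by
    intro n
    have h1 : (0:ℝ) < 1 - p ^ (2 * n + 1) := by simpa using hpos (2 * n)
    have h2 : p ^ (2 * n + 2) ≤ p ^ (2 * n + 1) :=
      pow_le_pow_of_le_one hp0.le hp1.le (by omega)
    rw [hfdef, le_div_iff₀ h1]
    linarith
  -- multipliability of f
  have hmul : Multipliable f := by
    have hlog : Summable fun n => Real.log (f n) := by
      apply Summable.of_nonneg_of_le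
        (fun n => Real.log_nonneg (hf1 n))
        (fun n => ?_)
        (Summable.mul_left (p / (1 - p))
          (summable_geometric_of_lt_one (by positivity) (by nlinarith)))
      · calc Real.log (f n) ≤ f n - 1 := Real.log_le_sub_one_of_pos (hfpos n)
          _ ≤ p / (1 - p) * q ^ n := by
              rw [← hpq]
              have h1 : 0 < 1 - p ^ (2 * n + 1) := by simpa using hpos (2 * n)
              have h2 : 1 - p ≤ 1 - p ^ (2 * n + 1) := by
                have h : p ^ (2 * n + 1) ≤ p ^ 1 :=
                  pow_le_pow_of_le_one hp0.le hp1.le (by omega)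
                rw [pow_one] at h
                linarith
              have h3 : f n - 1 = (p ^ (2 * n + 1) - p ^ (2 * n + 2)) /
                  (1 - p ^ (2 * n + 1)) := by
                rw [hfdef]
                field_simp
                ring
              rw [h3]
              have h4 : p ^ (2 * n + 1) - p ^ (2 * n + 2) ≤ p ^ (2 * n + 1) := by
                have : 0 ≤ p ^ (2 * n + 2) := by positivity
                linarith
              have h5 : (p ^ (2 * n + 1) - p ^ (2 * n + 2)) / (1 - p ^ (2 * n + 1))
                  ≤ p ^ (2 * n + 1) / (1 - p) :=
                div_le_div₀ (by positivity) h4 (by linarith) h2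
              refine h5.trans (le_of_eq ?_)
              rw [div_mul_eq_mul_div, ← pow_mul]
              ring_nf
    exact Real.multipliable_of_summable_log
      (fun n => hfpos n) hlog
  -- rewrite the qGamma product
  have hterm : ∀ n : ℕ, (1 - q ^ (n + 1)) / (1 - q ^ ((n : ℝ) + 1 / 2)) = f n := by
    intro n
    have h1 : q ^ (n + 1) = p ^ (2 * n + 2) := by
      rw [← hpq, ← pow_mul]; ring_nf
    have h2 : q ^ ((n : ℝ) + 1 / 2) = p ^ (2 * n + 1) := by
      rw [Real.rpow_add hq0, Real.rpow_natCast, ← Real.sqrt_eq_rpow, ← hpdef,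
        ← hpq, ← pow_mul]
      rw [pow_succ]
    rw [h1, h2]
  have hG : qGamma q (1 / 2) = Real.sqrt (1 - q) * ∏' n, f n := by
    rw [qGamma, show (1 : ℝ) - 1 / 2 = 1 / 2 by norm_num, ← Real.sqrt_eq_rpow]
    congr 1
    exact tprod_congr hterm
  -- rewrite the RHS terms
  have hne : (1 : ℝ) - p ≠ 0 := by linarith
  have hrterm : ∀ n : ℕ,
      (qNum p (2 * n + 2) / qNum p (2 * n + 1)) ^ 2 = f n * f n := by
    intro n
    rw [qNum, qNum, div_div_div_cancel_right₀ hne, hfdef, sq]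
  rw [hG, mul_pow, Real.sq_sqrt (by linarith : (0:ℝ) ≤ 1 - q),
    tprod_congr hrterm, hmul.tprod_mul hmul, qNum, qNumInf]
  have : (1 - p ^ 2) / (1 - p) / (1 / (1 - p)) = 1 - q := by
    rw [← hpq]; field_simp
  rw [this]
  ring
end

section
/- For 0 < Q and 1/Q > 1/2, the integral of the Tsallis-type Gaussian ∫_{-∞}^{∞} (1 - Q x²)^{1/Q} dx over the region where it is defined (interpreted via the formula ∫_{-∞}^{∞} ẽ_{1-Q}(-x²) dx with ẽ_{1-Q}(u) = (1+Qu)^{1/Q} supported where 1+Qu ≥ 0) equals √(π/Q) · Γ(1 + 1/Q)/Γ(3/2 + 1/Q). -/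
open MeasureTheory intervalIntegral Set

lemma beta_aux (p : ℝ) (hp : 0 < p) :
    ∫ x in (0:ℝ)..1, x ^ p * (1 - x) ^ p
      = Real.Gamma (p + 1) * Real.Gamma (p + 1) / Real.Gamma (2 * p + 2) := by
  have hs : 0 < ((p:ℂ) + 1).re := by simp; linarith
  have key := Complex.Gamma_mul_Gamma_eq_betaIntegral hs hs
  have hbeta : Complex.betaIntegral ((p:ℂ)+1) ((p:ℂ)+1)
      = ((∫ x in (0:ℝ)..1, x ^ p * (1 - x) ^ p : ℝ) : ℂ) := by
    rw [Complex.betaIntegral, ← intervalIntegral.integral_ofReal]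
    apply intervalIntegral.integral_congr
    intro x hx
    rw [Set.uIcc_of_le (by norm_num : (0:ℝ) ≤ 1)] at hx
    have hx0 : (0:ℝ) ≤ x := hx.1
    have hx1 : (0:ℝ) ≤ 1 - x := by linarith [hx.2]
    simp only [add_sub_cancel_right]
    rw [Complex.ofReal_mul, Complex.ofReal_cpow hx0, Complex.ofReal_cpow hx1]
    push_cast
    ring
  rw [hbeta] at key
  have h1 : ((p:ℂ)+1) + ((p:ℂ)+1) = ((2*p+2 : ℝ) : ℂ) := by push_cast; ring
  have h2 : ((p:ℂ)+1) = ((p+1 : ℝ) : ℂ) := by push_cast; ring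
  rw [h1, h2, Complex.Gamma_ofReal, Complex.Gamma_ofReal, ← Complex.ofReal_mul,
    ← Complex.ofReal_mul] at key
  have key' : Real.Gamma (p+1) * Real.Gamma (p+1)
      = Real.Gamma (2*p+2) * ∫ x in (0:ℝ)..1, x ^ p * (1 - x) ^ p := by
    exact_mod_cast key
  have hG3 : Real.Gamma (2*p+2) ≠ 0 := (Real.Gamma_pos_of_pos (by linarith)).ne'
  field_simp
  rw [show (p + 1) * 2 = 2 * p + 2 by ring]; linarith [key']


/-- The Tsallis-type Gaussian `ẽ_{1-Q}(-x²)`. -/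
noncomputable def tsallisGaussian (Q x : ℝ) : ℝ :=
  if 0 ≤ 1 - Q * x ^ 2 then (1 - Q * x ^ 2) ^ (1 / Q) else 0

theorem tsallis_gaussian_integral (Q : ℝ) (hQ : 0 < Q) (hQ' : 1 / 2 < 1 / Q) :
    ∫ x : ℝ, tsallisGaussian Q x
      = Real.sqrt (Real.pi / Q) * Real.Gamma (1 + 1 / Q) / Real.Gamma (3 / 2 + 1 / Q) := by
  unfold tsallisGaussian
  set p : ℝ := 1 / Q with hp_def
  have hp : 0 < p := by positivity
  have hsq : 0 < Real.sqrt Q := Real.sqrt_pos.mpr hQ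
  set g : ℝ → ℝ := Set.indicator (Set.Icc (-1:ℝ) 1) (fun t => (1 - t^2) ^ p) with hg_def
  -- Step A: pointwise identification
  have hA : ∀ x : ℝ, (if 0 ≤ 1 - Q * x ^ 2 then (1 - Q * x ^ 2) ^ (1 / Q) else 0)
      = g (Real.sqrt Q * x) := by
    intro x
    have hQx : (Real.sqrt Q * x) ^ 2 = Q * x ^ 2 := by
      rw [mul_pow, Real.sq_sqrt hQ.le]
    have hiff : Real.sqrt Q * x ∈ Set.Icc (-1:ℝ) 1 ↔ 0 ≤ 1 - Q * x ^ 2 := by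
      rw [Set.mem_Icc, ← abs_le, ← sq_le_one_iff_abs_le_one, hQx]
      constructor <;> intro h <;> linarith
    rw [hg_def]
    by_cases h : 0 ≤ 1 - Q * x ^ 2
    · rw [if_pos h, Set.indicator_of_mem (hiff.mpr h), hQx]
    · rw [if_neg h, Set.indicator_of_notMem (fun hm => h (hiff.mp hm))]
  refine (integral_congr_ae (Filter.Eventually.of_forall hA)).trans ?_
  rw [MeasureTheory.Measure.integral_comp_mul_left g (Real.sqrt Q),
    abs_of_pos (inv_pos.mpr hsq), smul_eq_mul]
  -- ∫ g = interval integral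
  have hB : ∫ t : ℝ, g t = ∫ t in (-1:ℝ)..1, (1 - t^2) ^ p := by
    rw [hg_def, MeasureTheory.integral_indicator measurableSet_Icc,
      intervalIntegral.integral_of_le (by norm_num : (-1:ℝ) ≤ 1),
      MeasureTheory.integral_Icc_eq_integral_Ioc]
  rw [hB]
  -- Step B: substitution t = -1 + 2u
  have hC := intervalIntegral.integral_comp_add_mul (fun t => (1 - t^2) ^ p)
      (two_ne_zero) (-1) (a := 0) (b := 1)
  norm_num at hC
  have hC2 : ∫ t in (-1:ℝ)..1, (1 - t^2) ^ p
      = 2 * ∫ u in (0:ℝ)..1, (1 - (-1 + 2*u)^2) ^ p := by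
    rw [hC]; ring
  have hD : ∫ u in (0:ℝ)..1, (1 - (-1 + 2*u)^2) ^ p
      = (4:ℝ)^p * ∫ u in (0:ℝ)..1, u ^ p * (1-u) ^ p := by
    rw [← intervalIntegral.integral_const_mul]
    apply intervalIntegral.integral_congr
    intro u hu
    rw [Set.uIcc_of_le (by norm_num : (0:ℝ) ≤ 1)] at hu
    have h0 : (0:ℝ) ≤ u := hu.1
    have h1 : (0:ℝ) ≤ 1 - u := by linarith [hu.2]
    have : 1 - (-1 + 2*u)^2 = 4 * (u * (1-u)) := by ring
    show (1 - (-1 + 2*u)^2) ^ p = 4 ^ p * (u ^ p * (1-u) ^ p)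
    rw [this, Real.mul_rpow (by norm_num) (by positivity), Real.mul_rpow h0 h1]
  rw [hC2, hD, beta_aux p hp]
  -- Step D: duplication formula
  have hdup := Real.Gamma_mul_Gamma_add_half (p + 1)
  have h2p : 2 * (p + 1) = 2 * p + 2 := by ring
  rw [h2p] at hdup
  have hG1 : 0 < Real.Gamma (p + 1) := Real.Gamma_pos_of_pos (by linarith)
  have hG2 : 0 < Real.Gamma (p + 1 + 1/2) := Real.Gamma_pos_of_pos (by linarith)
  have hG3 : 0 < Real.Gamma (2 * p + 2) := Real.Gamma_pos_of_pos (by linarith)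
  have hpi : 0 < Real.sqrt Real.pi := Real.sqrt_pos.mpr Real.pi_pos
  have hc : (2:ℝ) ^ (1 - (2*p+2)) * (2 * (4:ℝ)^p) = 1 := by
    have h4 : (4:ℝ)^p = (2:ℝ)^(2*p) := by
      rw [show (4:ℝ) = (2:ℝ)^(2:ℝ) by
            rw [show ((2:ℝ):ℝ) = ((2:ℕ):ℝ) by norm_num, Real.rpow_natCast]; norm_num,
        ← Real.rpow_mul (by norm_num)]
    rw [h4, show (2:ℝ) * (2:ℝ)^(2*p) = (2:ℝ)^(2*p+1) by
          rw [Real.rpow_add (by norm_num), Real.rpow_one]; ring,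
      ← Real.rpow_add (by norm_num : (0:ℝ) < 2), show 1 - (2*p+2) + (2*p+1) = 0 by ring,
      Real.rpow_zero]
  have hrw1 : Real.Gamma (1 + p) = Real.Gamma (p + 1) := by rw [add_comm]
  have hrw2 : Real.Gamma (3/2 + p) = Real.Gamma (p + 1 + 1/2) := by norm_num; ring_nf
  rw [hrw1, hrw2, Real.sqrt_div Real.pi_pos.le]
  field_simp
  rw [show (2 * (p + 1) + 1) / 2 = p + 1 + 1/2 by ring, h2p]
  linear_combination (2*(4:ℝ)^p) * hdup
    + (Real.Gamma (2*p+2)*Real.sqrt Real.pi) * hc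
end
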